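/- arXiv:1908.05590 — 6 statements merged into one kernel-verified Lean document; each statement's English description precedes it below -/
import Mathlib

section
/- Let n, k be positive integers, let λ : ℝ^k → ℝ^n be a map that is differentiable at the point u, and consider the vector fields on ℝ^n × ℝ^k given by X₀(x,u) = ((λ₁(u)x₁, …, λₙ(u)xₙ), 0) and, for a fixed multi-index α ∈ ℕ^n and a fixed index i ∈ {1,…,k}, U(x,u) = (0, x^α f_i), where x^α = x₁^{α₁}⋯xₙ^{αₙ} and f_i is the i-th standard basis vector of ℝ^k. Then for every point (x,u) the Lie bracket satisfies [X₀, U](x,u) = ( −x^α · (μ₁(u)x₁, …, μₙ(u)xₙ), ⟨λ(u), α⟩ · x^α · f_i ), where μ(u) = Dλ(u)[f_i] ∈ ℝ^n is the derivative of λ at u in the direction f_i and ⟨λ(u), α⟩ = Σ_{j=1}^n α_j λ_j(u). In particular the x-component of the bracket is homogeneous in x of degree |α| + 1, one higher than the degree |α| of U. -/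
set_option maxHeartbeats 1000000

section aux
open ContinuousLinearMap

variable {n k : ℕ}

private lemma keyFDerivX (lam : (Fin k → ℝ) → (Fin n → ℝ)) (x : Fin n → ℝ) (u : Fin k → ℝ)
    (h : DifferentiableAt ℝ lam u) :
    HasFDerivAt (fun p : (Fin n → ℝ) × (Fin k → ℝ) => ((fun j => lam p.2 j * p.1 j : Fin n → ℝ),
        (0 : Fin k → ℝ)))
      ((ContinuousLinearMap.pi fun j =>
          lam u j • ((proj j).comp (fst ℝ (Fin n → ℝ) (Fin k → ℝ))) +
          x j • ((proj j).comp ((fderiv ℝ lam u).comp (snd ℝ (Fin n → ℝ) (Fin k → ℝ))))).prod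
        (0 : ((Fin n → ℝ) × (Fin k → ℝ)) →L[ℝ] (Fin k → ℝ))) (x, u) := by
  have hlam : HasFDerivAt lam (fderiv ℝ lam u) u := h.hasFDerivAt
  have hsnd : HasFDerivAt (fun p : (Fin n → ℝ) × (Fin k → ℝ) => p.2)
      (snd ℝ (Fin n → ℝ) (Fin k → ℝ)) (x, u) := hasFDerivAt_snd
  have hcomp : HasFDerivAt (fun p : (Fin n → ℝ) × (Fin k → ℝ) => lam p.2)
      ((fderiv ℝ lam u).comp (snd ℝ (Fin n → ℝ) (Fin k → ℝ))) (x, u) :=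
    hlam.comp (x, u) hsnd
  refine HasFDerivAt.prodMk ?_ (hasFDerivAt_const _ _)
  apply hasFDerivAt_pi.2
  intro j
  have ha : HasFDerivAt (fun p : (Fin n → ℝ) × (Fin k → ℝ) => lam p.2 j)
      ((proj j).comp ((fderiv ℝ lam u).comp (snd ℝ (Fin n → ℝ) (Fin k → ℝ)))) (x, u) :=
    hasFDerivAt_pi'.1 hcomp j
  have hb : HasFDerivAt (fun p : (Fin n → ℝ) × (Fin k → ℝ) => p.1 j)
      ((proj j).comp (fst ℝ (Fin n → ℝ) (Fin k → ℝ))) (x, u) :=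
    by have := (hasFDerivAt_apply (𝕜 := ℝ) j x).comp (x, u) (hasFDerivAt_fst (𝕜 := ℝ) (p := (x, u))); exact this
  exact ha.mul hb

private lemma keyFDerivU (α : Fin n → ℕ) (i : Fin k) (x : Fin n → ℝ) (u : Fin k → ℝ) :
    HasFDerivAt (fun p : (Fin n → ℝ) × (Fin k → ℝ) => ((0 : Fin n → ℝ),
        (∏ l, p.1 l ^ α l) • (Pi.single i (1 : ℝ) : Fin k → ℝ)))
      ((0 : ((Fin n → ℝ) × (Fin k → ℝ)) →L[ℝ] (Fin n → ℝ)).prod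
        ((∑ l, (∏ j ∈ Finset.univ.erase l, x j ^ α j) •
            (((α l : ℝ) * x l ^ (α l - 1)) •
              ((proj l).comp (fst ℝ (Fin n → ℝ) (Fin k → ℝ))))).smulRight
          (Pi.single i (1 : ℝ) : Fin k → ℝ))) (x, u) := by
  refine HasFDerivAt.prodMk (hasFDerivAt_const _ _) ?_
  apply HasFDerivAt.smul_const
  exact HasFDerivAt.finset_prod (u := Finset.univ)
    (g := fun l (p : (Fin n → ℝ) × (Fin k → ℝ)) => p.1 l ^ α l)
    (g' := fun l => ((α l : ℝ) * x l ^ (α l - 1)) •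
      ((proj l).comp (fst ℝ (Fin n → ℝ) (Fin k → ℝ))))
    (fun l _ => (hasDerivAt_pow (α l) (x l)).comp_hasFDerivAt (x, u)
      (by have := ((hasFDerivAt_apply (𝕜 := ℝ) l x).comp (x, u) (hasFDerivAt_fst (𝕜 := ℝ) (p := (x, u)))); exact this))

end aux

/-- For `X₀(x,u) = (diag(λ(u)) x, 0)` and `U(x,u) = (0, x^α f_i)` (a monomial vector field in a
centre direction), the Lie bracket is
`[X₀, U](x,u) = (−x^α (μ₁(u)x₁, …, μₙ(u)xₙ), ⟨λ(u), α⟩ x^α f_i)` with `μ(u) = Dλ(u)[f_i]`.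
In particular the `x`-component is homogeneous in `x` of degree `|α| + 1`. -/
theorem lieBracket_monomial_u_direction (n k : ℕ) (hn : 0 < n) (hk : 0 < k)
    (lam : (Fin k → ℝ) → (Fin n → ℝ)) (α : Fin n → ℕ) (i : Fin k)
    (X₀ U : ((Fin n → ℝ) × (Fin k → ℝ)) → ((Fin n → ℝ) × (Fin k → ℝ)))
    (hX₀ : ∀ p, X₀ p = ((fun j => lam p.2 j * p.1 j : Fin n → ℝ), (0 : Fin k → ℝ)))
    (hU : ∀ p, U p = ((0 : Fin n → ℝ),
      (∏ l, p.1 l ^ α l) • (Pi.single i (1 : ℝ) : Fin k → ℝ))) :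
    ∀ (x : Fin n → ℝ) (u : Fin k → ℝ), DifferentiableAt ℝ lam u →
      (VectorField.lieBracket ℝ X₀ U (x, u) =
        ((-(∏ l, x l ^ α l)) •
            (fun j => fderiv ℝ lam u (Pi.single i (1 : ℝ)) j * x j : Fin n → ℝ),
          (∑ j, (α j : ℝ) * lam u j) •
            (∏ l, x l ^ α l) • (Pi.single i (1 : ℝ) : Fin k → ℝ))) ∧
      ∀ c : ℝ, (VectorField.lieBracket ℝ X₀ U (c • x, u)).1 =
          c ^ ((∑ j, α j) + 1) • (VectorField.lieBracket ℝ X₀ U (x, u)).1 := by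
  intro x u hdiff
  have hXfun : X₀ = fun p => ((fun j => lam p.2 j * p.1 j : Fin n → ℝ), (0 : Fin k → ℝ)) :=
    funext hX₀
  have hUfun : U = fun p => ((0 : Fin n → ℝ),
      (∏ l, p.1 l ^ α l) • (Pi.single i (1 : ℝ) : Fin k → ℝ)) := funext hU
  have key : ∀ y : Fin n → ℝ, VectorField.lieBracket ℝ X₀ U (y, u) =
      ((-(∏ l, y l ^ α l)) •
          (fun j => fderiv ℝ lam u (Pi.single i (1 : ℝ)) j * y j : Fin n → ℝ),
        (∑ j, (α j : ℝ) * lam u j) •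
          (∏ l, y l ^ α l) • (Pi.single i (1 : ℝ) : Fin k → ℝ)) := by
    intro y
    have hX := keyFDerivX lam y u hdiff
    have hU2 := keyFDerivU α i y u
    rw [← hXfun] at hX
    rw [← hUfun] at hU2
    rw [VectorField.lieBracket, hX.fderiv, hU2.fderiv, hX₀ (y, u), hU (y, u)]
    ext j
    · simp only [ContinuousLinearMap.prod_apply, ContinuousLinearMap.pi_apply,
        ContinuousLinearMap.smulRight_apply, ContinuousLinearMap.coe_sum',
        ContinuousLinearMap.add_apply, ContinuousLinearMap.coe_smul',
        ContinuousLinearMap.coe_comp', Function.comp_apply, ContinuousLinearMap.proj_apply,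
        ContinuousLinearMap.coe_fst', ContinuousLinearMap.coe_snd', Pi.smul_apply,
        ContinuousLinearMap.zero_apply, Prod.fst_sub, Prod.snd_sub, Pi.sub_apply, Pi.zero_apply,
        smul_eq_mul, Finset.sum_apply, neg_smul, map_smul]
      ring
    · simp only [ContinuousLinearMap.prod_apply, ContinuousLinearMap.pi_apply,
        ContinuousLinearMap.smulRight_apply, ContinuousLinearMap.coe_sum',
        ContinuousLinearMap.add_apply, ContinuousLinearMap.coe_smul',
        ContinuousLinearMap.coe_comp', Function.comp_apply, ContinuousLinearMap.proj_apply,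
        ContinuousLinearMap.coe_fst', ContinuousLinearMap.coe_snd', Pi.smul_apply,
        ContinuousLinearMap.zero_apply, Prod.fst_sub, Prod.snd_sub, Pi.sub_apply, Pi.zero_apply,
        smul_eq_mul, Finset.sum_apply, sub_zero]
      have hscal : (∑ l, (∏ j ∈ Finset.univ.erase l, y j ^ α j) *
          ((α l : ℝ) * y l ^ (α l - 1) * (lam u l * y l))) =
          (∑ l, (α l : ℝ) * lam u l) * ∏ l, y l ^ α l := by
        rw [Finset.sum_mul]
        refine Finset.sum_congr rfl fun l _ => ?_
        rcases Nat.eq_zero_or_pos (α l) with h | h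
        · simp [h]
        · have hy : y l ^ (α l - 1) * y l = y l ^ α l := by
            rw [← pow_succ, Nat.sub_add_cancel h]
          have hp : y l ^ α l * ∏ j ∈ Finset.univ.erase l, y j ^ α j = ∏ j, y j ^ α j :=
            Finset.mul_prod_erase Finset.univ (fun j => y j ^ α j) (Finset.mem_univ l)
          calc (∏ j ∈ Finset.univ.erase l, y j ^ α j) *
              ((α l : ℝ) * y l ^ (α l - 1) * (lam u l * y l))
              = (α l : ℝ) * lam u l * (y l ^ (α l - 1) * y l *
                ∏ j ∈ Finset.univ.erase l, y j ^ α j) := by ring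
            _ = (α l : ℝ) * lam u l * ∏ j, y j ^ α j := by rw [hy, hp]
      rw [hscal, mul_assoc]
  refine ⟨key x, ?_⟩
  intro c
  rw [key (c • x), key x]
  simp only
  funext j
  have hprod : (∏ l, (c * x l) ^ α l) = c ^ (∑ j, α j) * ∏ l, x l ^ α l := by
    simp only [mul_pow, Finset.prod_mul_distrib, Finset.prod_pow_eq_pow_sum]
  simp only [Pi.smul_apply, smul_eq_mul]
  rw [hprod, pow_succ]
  ring
end

section
/- Fix α, β ∈ ℝ and let A be the ℝ-subalgebra of the algebra of functions ℝ → ℝ (with pointwise operations) generated by the five functions t ↦ t, t ↦ e^{αt}, t ↦ e^{−αt}, t ↦ e^{βt}, t ↦ e^{−βt}. If P ∈ A, then the function t ↦ ∫₀ᵗ P(τ) dτ also belongs to A. -/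
open Real intervalIntegral MeasureTheory

/-- antiderivative of `exp (γ τ)` -/
lemma aux_int_exp (γ : ℝ) (hγ : γ ≠ 0) (t : ℝ) :
    ∫ τ in (0:ℝ)..t, Real.exp (γ*τ) = Real.exp (γ*t)/γ - 1/γ := by
  have h : ∀ x ∈ Set.uIcc (0:ℝ) t,
      HasDerivAt (fun x => Real.exp (γ*x)/γ) (Real.exp (γ*x)) x := by
    intro x _
    have h1 : HasDerivAt (fun x : ℝ => γ * x) γ x := by
      simpa using (hasDerivAt_id x).const_mul γ
    have h2 := h1.exp
    have h3 := h2.div_const γ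
    simpa [mul_div_assoc, mul_div_cancel_right₀ _ hγ] using h3
  have hint : IntervalIntegrable (fun x => Real.exp (γ*x)) volume 0 t :=
    (Real.continuous_exp.comp (continuous_const.mul continuous_id)).intervalIntegrable _ _
  have := integral_eq_sub_of_hasDerivAt h hint
  simpa using this

/-- Integral of monomials `τ^n e^{γτ}` lies in any subalgebra containing `t` and `e^{γt}`. -/
lemma aux_integral_monomial (A : Subalgebra ℝ (ℝ → ℝ)) (γ : ℝ)
    (hT : (fun t : ℝ => t) ∈ A) (hexp : (fun t => Real.exp (γ*t)) ∈ A) (n : ℕ) :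
    (fun t => ∫ τ in (0:ℝ)..t, τ^n * Real.exp (γ*τ)) ∈ A := by
  by_cases hγ : γ = 0
  · subst hγ
    have : (fun t => ∫ τ in (0:ℝ)..t, τ^n * Real.exp (0*τ))
        = ((n:ℝ)+1)⁻¹ • ((fun t : ℝ => t)^(n+1)) := by
      funext t
      simp [integral_pow, Pi.pow_apply]
      ring
    rw [this]
    exact A.smul_mem (pow_mem hT _) _
  · induction n with
    | zero =>
      have : (fun t => ∫ τ in (0:ℝ)..t, τ^0 * Real.exp (γ*τ))
          = γ⁻¹ • (fun t => Real.exp (γ*t)) - (algebraMap ℝ (ℝ → ℝ)) (1/γ) := by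
        funext t
        simp [aux_int_exp γ hγ t, Algebra.algebraMap_eq_smul_one]
        ring
      rw [this]
      exact A.sub_mem (A.smul_mem hexp _) (A.algebraMap_mem _)
    | succ n ih =>
      -- integration by parts
      have key : ∀ t : ℝ, ∫ τ in (0:ℝ)..t, τ^(n+1) * Real.exp (γ*τ)
          = t^(n+1) * (Real.exp (γ*t)/γ)
            - ((n:ℝ)+1)/γ * ∫ τ in (0:ℝ)..t, τ^n * Real.exp (γ*τ) := by
        intro t
        have hu : ∀ x ∈ Set.uIcc (0:ℝ) t,
            HasDerivAt (fun x : ℝ => x^(n+1)) (((n:ℝ)+1) * x^n) x := by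
          intro x _
          simpa using hasDerivAt_pow (n+1) x
        have hv : ∀ x ∈ Set.uIcc (0:ℝ) t,
            HasDerivAt (fun x => Real.exp (γ*x)/γ) (Real.exp (γ*x)) x := by
          intro x _
          have h1 : HasDerivAt (fun x : ℝ => γ * x) γ x := by
            simpa using (hasDerivAt_id x).const_mul γ
          simpa [mul_div_assoc, mul_div_cancel_right₀ _ hγ] using (h1.exp).div_const γ
        have hiu : IntervalIntegrable (fun x : ℝ => ((n:ℝ)+1) * x^n) volume 0 t :=
          (continuous_const.mul (continuous_pow n)).intervalIntegrable _ _
        have hiv : IntervalIntegrable (fun x => Real.exp (γ*x)) volume 0 t :=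
          (Real.continuous_exp.comp (continuous_const.mul continuous_id)).intervalIntegrable _ _
        have := integral_mul_deriv_eq_deriv_mul hu hv hiu hiv
        rw [this]
        have : ∫ x in (0:ℝ)..t, ((n:ℝ)+1) * x^n * (Real.exp (γ*x)/γ)
            = ((n:ℝ)+1)/γ * ∫ x in (0:ℝ)..t, x^n * Real.exp (γ*x) := by
          rw [← intervalIntegral.integral_const_mul]
          congr 1
          funext x
          ring
        rw [this]
        ring_nf
      have heq : (fun t => ∫ τ in (0:ℝ)..t, τ^(n+1) * Real.exp (γ*τ))
          = γ⁻¹ • ((fun t : ℝ => t)^(n+1) * (fun t => Real.exp (γ*t)))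
            - (((n:ℝ)+1)/γ) • (fun t => ∫ τ in (0:ℝ)..t, τ^n * Real.exp (γ*τ)) := by
        funext t
        simp [key t, Pi.pow_apply]
        ring
      rw [heq]
      exact A.sub_mem (A.smul_mem (A.mul_mem (pow_mem hT _) hexp) _) (A.smul_mem ih _)

lemma aux_exp_zpow (A : Subalgebra ℝ (ℝ → ℝ)) (γ : ℝ)
    (hp : (fun t => Real.exp (γ*t)) ∈ A) (hm : (fun t => Real.exp (-γ*t)) ∈ A) (i : ℤ) :
    (fun t => Real.exp ((i*γ)*t)) ∈ A := by
  obtain ⟨n, rfl | rfl⟩ := i.eq_nat_or_neg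
  · have : (fun t => Real.exp ((((n:ℤ):ℝ)*γ)*t)) = (fun t => Real.exp (γ*t))^n := by
      funext t
      rw [Pi.pow_apply, ← Real.exp_nat_mul]
      congr 1; push_cast; ring
    rw [this]; exact pow_mem hp n
  · simp only [Int.cast_neg, Int.cast_natCast]
    have h : (fun t => Real.exp ((-(n:ℝ))*γ*t)) = (fun t => Real.exp (-γ*t))^n := by
      funext t
      rw [Pi.pow_apply, ← Real.exp_nat_mul]
      congr 1; ring
    rw [h]; exact pow_mem hm n

/-- The ring `R_{α,β} = ℝ[t, e^{±αt}, e^{±βt}]` is closed under the integration operator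
`I_t(P) = ∫₀ᵗ P(τ) dτ`. -/
theorem integral_mem_adjoin_exp (α β : ℝ) (P : ℝ → ℝ)
    (hP : P ∈ Algebra.adjoin ℝ
      ({fun t => t, fun t => Real.exp (α * t), fun t => Real.exp (-α * t),
        fun t => Real.exp (β * t), fun t => Real.exp (-β * t)} : Set (ℝ → ℝ))) :
    (fun t => ∫ τ in (0 : ℝ)..t, P τ) ∈ Algebra.adjoin ℝ
      ({fun t => t, fun t => Real.exp (α * t), fun t => Real.exp (-α * t),
        fun t => Real.exp (β * t), fun t => Real.exp (-β * t)} : Set (ℝ → ℝ)) := by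
  set S : Set (ℝ → ℝ) :=
      ({fun t => t, fun t => Real.exp (α * t), fun t => Real.exp (-α * t),
        fun t => Real.exp (β * t), fun t => Real.exp (-β * t)} : Set (ℝ → ℝ)) with hS
  set A := Algebra.adjoin ℝ S with hA
  set M : Set (ℝ → ℝ) :=
      {f | ∃ (n : ℕ) (i j : ℤ), f = fun t => t^n * Real.exp (((i:ℝ)*α+(j:ℝ)*β)*t)} with hM
  -- membership of `t` and `e^{±αt}, e^{±βt}` in `A`
  have hT : (fun t : ℝ => t) ∈ A := Algebra.subset_adjoin (by simp [hS])
  have hpa : (fun t => Real.exp (α*t)) ∈ A := Algebra.subset_adjoin (by simp [hS])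
  have hma : (fun t => Real.exp (-α*t)) ∈ A := Algebra.subset_adjoin (by simp [hS])
  have hpb : (fun t => Real.exp (β*t)) ∈ A := Algebra.subset_adjoin (by simp [hS])
  have hmb : (fun t => Real.exp (-β*t)) ∈ A := Algebra.subset_adjoin (by simp [hS])
  -- every exponential e^{(iα+jβ)t} is in A
  have hexp : ∀ i j : ℤ, (fun t => Real.exp (((i:ℝ)*α+(j:ℝ)*β)*t)) ∈ A := by
    intro i j
    have h1 := aux_exp_zpow A α hpa hma i
    have h2 := aux_exp_zpow A β hpb hmb j
    have := A.mul_mem h1 h2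
    have heq : (fun t => Real.exp (((i:ℝ)*α)*t)) * (fun t => Real.exp (((j:ℝ)*β)*t))
        = fun t => Real.exp (((i:ℝ)*α+(j:ℝ)*β)*t) := by
      funext t
      rw [Pi.mul_apply, ← Real.exp_add]
      congr 1; ring
    rwa [heq] at this
  -- every monomial is in A
  have hMA : ∀ f ∈ M, f ∈ A := by
    rintro f ⟨n, i, j, rfl⟩
    have : (fun t : ℝ => t^n * Real.exp (((i:ℝ)*α+(j:ℝ)*β)*t))
        = (fun t : ℝ => t)^n * (fun t => Real.exp (((i:ℝ)*α+(j:ℝ)*β)*t)) := by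
      funext t; simp [Pi.pow_apply]
    rw [this]
    exact A.mul_mem (pow_mem hT n) (hexp i j)
  -- M * M ⊆ M
  have hmul : ∀ f ∈ Submodule.span ℝ M, ∀ g ∈ Submodule.span ℝ M,
      f * g ∈ Submodule.span ℝ M := by
    intro f hf g hg
    have h1 : f * g ∈ Submodule.span ℝ M * Submodule.span ℝ M :=
      Submodule.mul_mem_mul hf hg
    rw [Submodule.span_mul_span] at h1
    refine Submodule.span_le.mpr ?_ h1
    rintro x hx
    rw [Set.mem_mul] at hx
    obtain ⟨a, ha, b, hb, rfl⟩ := hx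
    obtain ⟨n, i, j, rfl⟩ := ha
    obtain ⟨m, i', j', rfl⟩ := hb
    refine Submodule.subset_span ⟨n+m, i+i', j+j', ?_⟩
    funext t
    rw [Pi.mul_apply]
    have harg : (((i:ℝ)*α+(j:ℝ)*β)*t) + (((i':ℝ)*α+(j':ℝ)*β)*t)
        = ((((i+i':ℤ)):ℝ)*α+(((j+j':ℤ)):ℝ)*β)*t := by push_cast; ring
    rw [pow_add, ← harg, Real.exp_add]
    ring
  -- A ⊆ span M
  have hspan : P ∈ Submodule.span ℝ M := by
    refine Algebra.adjoin_induction (s := S)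
      (p := fun x _ => x ∈ Submodule.span ℝ M) ?_ ?_ ?_ ?_ hP
    · intro x hx
      refine Submodule.subset_span ?_
      rw [hS] at hx
      simp only [Set.mem_insert_iff, Set.mem_singleton_iff] at hx
      rcases hx with rfl | rfl | rfl | rfl | rfl
      · exact ⟨1, 0, 0, by funext t; simp⟩
      · exact ⟨0, 1, 0, by funext t; simp⟩
      · exact ⟨0, -1, 0, by funext t; push_cast; simp⟩
      · exact ⟨0, 0, 1, by funext t; simp⟩
      · exact ⟨0, 0, -1, by funext t; push_cast; simp⟩
    · intro r
      have h1 : (1 : ℝ → ℝ) ∈ M := ⟨0, 0, 0, by funext t; simp⟩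
      have : (algebraMap ℝ (ℝ → ℝ)) r = r • (1 : ℝ → ℝ) := by
        funext t; simp [Algebra.algebraMap_eq_smul_one]
      rw [this]
      exact Submodule.smul_mem _ r (Submodule.subset_span h1)
    · intro x y _ _ hx hy; exact Submodule.add_mem _ hx hy
    · intro x y _ _ hx hy; exact hmul x hx y hy
  -- integrate, by linearity
  have main : Continuous P ∧ (fun t => ∫ τ in (0:ℝ)..t, P τ) ∈ A := by
    refine Submodule.span_induction (p := fun f _ =>
      Continuous f ∧ (fun t => ∫ τ in (0:ℝ)..t, f τ) ∈ A) ?_ ?_ ?_ ?_ hspan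
    · rintro f ⟨n, i, j, rfl⟩
      constructor
      · exact (continuous_pow n).mul
          (Real.continuous_exp.comp (continuous_const.mul continuous_id))
      · exact aux_integral_monomial A _ hT (hexp i j) n
    · constructor
      · exact continuous_const
      · convert A.zero_mem using 1
        funext t
        simp
    · rintro f g _ _ ⟨hfc, hfA⟩ ⟨hgc, hgA⟩
      refine ⟨hfc.add hgc, ?_⟩
      have : (fun t => ∫ τ in (0:ℝ)..t, (f + g) τ)
          = (fun t => ∫ τ in (0:ℝ)..t, f τ) + (fun t => ∫ τ in (0:ℝ)..t, g τ) := by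
        funext t
        rw [Pi.add_apply]
        rw [show (fun τ => (f + g) τ) = fun τ => f τ + g τ from rfl]
        exact integral_add (hfc.intervalIntegrable _ _) (hgc.intervalIntegrable _ _)
      rw [this]
      exact A.add_mem hfA hgA
    · rintro r f _ ⟨hfc, hfA⟩
      refine ⟨hfc.const_smul r, ?_⟩
      have : (fun t => ∫ τ in (0:ℝ)..t, (r • f) τ)
          = r • (fun t => ∫ τ in (0:ℝ)..t, f τ) := by
        funext t
        simp only [Pi.smul_apply, smul_eq_mul, intervalIntegral.integral_const_mul]
      rw [this]
      exact A.smul_mem hfA r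
  exact main.2
end

section
/- Let N ∈ ℕ and, for each i = 1,…,N, let p_i and q_i be real polynomials in two variables with q_i not identically zero, let j_i ∈ ℕ and n_i, m_i ∈ ℤ. Define S = {(α,β) ∈ ℝ² : q_i(α,β) ≠ 0 for all i} and, for (α,β) ∈ S and t ∈ ℝ, P(α,β;t) = Σ_{i=1}^N (p_i(α,β)/q_i(α,β)) · t^{j_i} · e^{(n_i α + m_i β)t}. Suppose g : ℝ → ℝ is such that for every t ∈ ℝ, P(α,β;t) tends to g(t) as (α,β) tends to (0,0) within S. Then g is a polynomial function, i.e. there is a real polynomial p with g(t) = p(t) for all t. -/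
open Filter Polynomial Topology
open scoped ContDiff Nat

lemma contDiff_polyeval (p : ℝ[X]) : ContDiff ℝ ∞ fun x : ℝ => p.eval x := by
  induction p using Polynomial.induction_on' with
  | add p q hp hq => simpa using hp.add hq
  | monomial n a =>
      simpa [Polynomial.eval_monomial] using (contDiff_const (c := a)).mul (contDiff_id.pow n)

lemma poly_limit_coeff (ν : ℕ) : ∀ (p : ℝ[X]) (c : ℝ),
    Tendsto (fun s => p.eval s / s ^ ν) (𝓝[>] (0:ℝ)) (𝓝 c) →
    (∀ k < ν, p.coeff k = 0) ∧ c = p.coeff ν := by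
  induction ν with
  | zero =>
    intro p c h
    simp only [pow_zero, div_one] at h
    have h2 : Tendsto (fun s => p.eval s) (𝓝[>] (0:ℝ)) (𝓝 (p.eval 0)) :=
      ((p.continuous_aeval).tendsto 0).mono_left nhdsWithin_le_nhds
    exact ⟨fun k hk => absurd hk (Nat.not_lt_zero k),
      (tendsto_nhds_unique h h2).trans (Polynomial.coeff_zero_eq_eval_zero p).symm⟩
  | succ ν IH =>
    intro p c h
    have hid : Tendsto (fun s : ℝ => s) (𝓝[>] (0:ℝ)) (𝓝 0) :=
      (continuous_id.tendsto 0).mono_left nhdsWithin_le_nhds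
    have h0 : Tendsto (fun s => p.eval s / s ^ ν) (𝓝[>] (0:ℝ)) (𝓝 0) := by
      have heq : ∀ᶠ s in 𝓝[>] (0:ℝ), (p.eval s / s ^ (ν+1)) * s = p.eval s / s ^ ν := by
        filter_upwards [self_mem_nhdsWithin] with s hs
        have hs0 : (s:ℝ) ≠ 0 := ne_of_gt hs
        rw [pow_succ, ← div_div, div_mul_cancel₀ _ hs0]
      have := h.mul hid
      rw [mul_zero] at this
      exact this.congr' heq
    obtain ⟨hlow, hν⟩ := IH p 0 h0
    have hlow' : ∀ k < ν + 1, p.coeff k = 0 := by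
      intro k hk
      rcases Nat.lt_succ_iff_lt_or_eq.mp hk with h' | h'
      · exact hlow k h'
      · rw [h']; exact hν.symm
    obtain ⟨p₁, rfl⟩ : (X : ℝ[X]) ^ (ν+1) ∣ p := Polynomial.X_pow_dvd_iff.mpr hlow'
    have heq : ∀ᶠ s in 𝓝[>] (0:ℝ), (X ^ (ν+1) * p₁ : ℝ[X]).eval s / s ^ (ν+1) = p₁.eval s := by
      filter_upwards [self_mem_nhdsWithin] with s hs
      have hs0 : (s:ℝ) ≠ 0 := ne_of_gt hs
      simp only [Polynomial.eval_mul, Polynomial.eval_pow, Polynomial.eval_X]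
      field_simp
    have h2 : Tendsto (fun s => (X ^ (ν+1) * p₁ : ℝ[X]).eval s / s ^ (ν+1)) (𝓝[>] (0:ℝ))
        (𝓝 (p₁.eval 0)) := by
      have : Tendsto (fun s => p₁.eval s) (𝓝[>] (0:ℝ)) (𝓝 (p₁.eval 0)) :=
        ((p₁.continuous_aeval).tendsto 0).mono_left nhdsWithin_le_nhds
      exact this.congr' (heq.mono fun s hs => hs.symm)
    refine ⟨hlow', (tendsto_nhds_unique h h2).trans ?_⟩
    rw [← Polynomial.coeff_zero_eq_eval_zero]
    have := Polynomial.coeff_X_pow_mul p₁ (ν+1) 0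
    simpa using this.symm

lemma tendsto_zero_of_iteratedDeriv_zero : ∀ (ν : ℕ) (h : ℝ → ℝ), ContDiff ℝ ∞ h →
    (∀ k ≤ ν, iteratedDeriv k h 0 = 0) →
    Tendsto (fun s => h s / s ^ ν) (𝓝[>] (0:ℝ)) (𝓝 0)
  | 0, h, hcd, hz => by
      simp only [pow_zero, div_one]
      have h0 : h 0 = 0 := by simpa using hz 0 le_rfl
      simpa [h0] using (hcd.continuous.tendsto 0).mono_left nhdsWithin_le_nhds
  | (ν+1), h, hcd, hz => by
      have hd : ContDiff ℝ ∞ (deriv h) := (contDiff_infty_iff_deriv.mp hcd).2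
      have IH := tendsto_zero_of_iteratedDeriv_zero ν (deriv h) hd (fun k hk => by
        have := hz (k+1) (by omega)
        rwa [iteratedDeriv_succ'] at this)
      apply HasDerivAt.lhopital_zero_nhdsGT
        (f := h) (g := fun s : ℝ => s ^ (ν+1)) (f' := deriv h)
        (g' := fun s : ℝ => ((ν:ℝ)+1) * s ^ ν)
      · exact Eventually.of_forall fun x =>
          ((hcd.differentiable (by simp)).differentiableAt).hasDerivAt
      · refine Eventually.of_forall fun x => ?_
        simpa using hasDerivAt_pow (ν+1) x
      · filter_upwards [self_mem_nhdsWithin] with x hx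
        have hx' : (0:ℝ) < x := hx
        positivity
      · have h0 : h 0 = 0 := by simpa using hz 0 (by omega)
        simpa [h0] using (hcd.continuous.tendsto 0).mono_left nhdsWithin_le_nhds
      · have : Tendsto (fun s : ℝ => s ^ (ν+1)) (𝓝 (0:ℝ)) (𝓝 ((0:ℝ) ^ (ν+1))) :=
          (continuous_pow (ν+1)).tendsto 0
        simpa [zero_pow (Nat.succ_ne_zero ν)] using this.mono_left nhdsWithin_le_nhds
      · have heq : (fun x : ℝ => deriv h x / (((ν:ℝ)+1) * x ^ ν)) =
            fun x : ℝ => (deriv h x / x ^ ν) * ((ν:ℝ)+1)⁻¹ := by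
          funext x
          rw [mul_comm ((ν:ℝ)+1), ← div_div, div_eq_mul_inv]
        rw [heq]
        simpa using IH.mul_const ((ν:ℝ)+1)⁻¹

lemma iteratedDeriv_polyeval (p : ℝ[X]) : ∀ k : ℕ,
    iteratedDeriv k (fun x => p.eval x) = fun x => (Polynomial.derivative^[k] p).eval x
  | 0 => by simp [iteratedDeriv_zero]
  | (k+1) => by
      rw [iteratedDeriv_succ']
      have hder : deriv (fun x => p.eval x) = fun x => (Polynomial.derivative p).eval x :=
        funext fun x => Polynomial.deriv p
      rw [hder, iteratedDeriv_polyeval (Polynomial.derivative p) k, Function.iterate_succ_apply]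

lemma iteratedDeriv_sub' {f g : ℝ → ℝ} (hf : ContDiff ℝ ∞ f) (hg : ContDiff ℝ ∞ g)
    (k : ℕ) (x : ℝ) :
    iteratedDeriv k (fun s => f s - g s) x = iteratedDeriv k f x - iteratedDeriv k g x := by
  have := iteratedDerivWithin_sub (Set.mem_univ x) uniqueDiffOn_univ
    (f := f) (g := g) (n := k)
    ((hf.of_le (by exact_mod_cast le_top)).contDiffWithinAt)
    ((hg.of_le (by exact_mod_cast le_top)).contDiffWithinAt)
  exact (by simpa [iteratedDerivWithin_univ] using this : iteratedDeriv k (f - g) x = _)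

lemma limit_eq_taylor_coeff {f : ℝ → ℝ} (hf : ContDiff ℝ ∞ f) (ν : ℕ) (c : ℝ)
    (h : Tendsto (fun s => f s / s ^ ν) (𝓝[>] (0:ℝ)) (𝓝 c)) :
    c = iteratedDeriv ν f 0 / ν ! := by
  set p : ℝ[X] :=
    ∑ k ∈ Finset.range (ν+1), Polynomial.C (iteratedDeriv k f 0 / k !) * Polynomial.X ^ k with hp
  have hcoeff : ∀ k ≤ ν, p.coeff k = iteratedDeriv k f 0 / k ! := by
    intro k hk
    rw [hp, Polynomial.finset_sum_coeff]
    rw [Finset.sum_eq_single k]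
    · simp
    · intro b _ hbk
      simp [Polynomial.coeff_C_mul, Polynomial.coeff_X_pow, Ne.symm hbk]
    · intro hk'
      exact absurd (Finset.mem_range.mpr (by omega)) (fun hh => hk' hh)
  have hpc : ContDiff ℝ ∞ fun x : ℝ => p.eval x := contDiff_polyeval p
  have hpev : ∀ k ≤ ν, iteratedDeriv k (fun x => p.eval x) 0 = iteratedDeriv k f 0 := by
    intro k hk
    rw [iteratedDeriv_polyeval]
    simp only []
    have h1 : (Polynomial.derivative^[k] p).eval 0 = (Polynomial.derivative^[k] p).coeff 0 :=
      (Polynomial.coeff_zero_eq_eval_zero _).symm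
    rw [h1, Polynomial.coeff_iterate_derivative]
    simp only [zero_add, Nat.descFactorial_self, nsmul_eq_mul]
    rw [hcoeff k hk]
    field_simp
  have hφ : ∀ k ≤ ν, iteratedDeriv k (fun s => f s - p.eval s) 0 = 0 := by
    intro k hk
    rw [iteratedDeriv_sub' hf hpc, hpev k hk, sub_self]
  have htz := tendsto_zero_of_iteratedDeriv_zero ν _ (hf.sub hpc) hφ
  have hpl : Tendsto (fun s => p.eval s / s ^ ν) (𝓝[>] (0:ℝ)) (𝓝 c) := by
    have := h.sub htz
    rw [sub_zero] at this
    refine this.congr fun s => ?_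
    ring
  have := (poly_limit_coeff ν p c hpl).2
  rw [this, hcoeff ν le_rfl]

noncomputable def stepP (b : ℝ) (p : ℝ[X]) : ℝ[X] :=
  Polynomial.derivative p + Polynomial.C b * p

lemma fsum_hasDerivAt {N : ℕ} (B : Fin N → ℝ[X]) (β : Fin N → ℝ) (s : ℝ) :
    HasDerivAt (fun s => ∑ i, (B i).eval s * Real.exp (β i * s))
      (∑ i, (stepP (β i) (B i)).eval s * Real.exp (β i * s)) s := by
  apply HasDerivAt.fun_sum
  intro i _
  have h1 : HasDerivAt (fun s : ℝ => (B i).eval s)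
      ((Polynomial.derivative (B i)).eval s) s := (B i).hasDerivAt s
  have h2 : HasDerivAt (fun s : ℝ => Real.exp (β i * s)) (β i * Real.exp (β i * s)) s := by
    simpa [Function.comp_def, mul_comm] using
      (Real.hasDerivAt_exp (β i * s)).comp s ((hasDerivAt_id s).const_mul (β i))
  have := h1.fun_mul h2
  refine this.congr_deriv ?_
  simp only [stepP, Polynomial.eval_add, Polynomial.eval_mul, Polynomial.eval_C]
  ring

lemma fsum_contDiff {N : ℕ} (B : Fin N → ℝ[X]) (β : Fin N → ℝ) :
    ContDiff ℝ ∞ (fun s => ∑ i, (B i).eval s * Real.exp (β i * s)) := by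
  apply ContDiff.sum
  intro i _
  exact (contDiff_polyeval (B i)).mul
    (Real.contDiff_exp.comp ((contDiff_const).mul contDiff_id))

lemma fsum_deriv {N : ℕ} (B : Fin N → ℝ[X]) (β : Fin N → ℝ) :
    deriv (fun s => ∑ i, (B i).eval s * Real.exp (β i * s)) =
      fun s => ∑ i, (stepP (β i) (B i)).eval s * Real.exp (β i * s) :=
  funext fun s => (fsum_hasDerivAt B β s).deriv

lemma fsum_iteratedDeriv {N : ℕ} (β : Fin N → ℝ) : ∀ (ν : ℕ) (B : Fin N → ℝ[X]),
    iteratedDeriv ν (fun s => ∑ i, (B i).eval s * Real.exp (β i * s)) =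
      fun s => ∑ i, ((stepP (β i))^[ν] (B i)).eval s * Real.exp (β i * s)
  | 0, B => by simp [iteratedDeriv_zero]
  | (ν+1), B => by
      rw [iteratedDeriv_succ', fsum_deriv,
        fsum_iteratedDeriv β ν (fun i => stepP (β i) (B i))]
      simp only [Function.iterate_succ_apply]

lemma stepP_C_mul (b a : ℝ) (p : ℝ[X]) : stepP b (Polynomial.C a * p) = Polynomial.C a * stepP b p := by
  simp only [stepP, Polynomial.derivative_C_mul]
  ring

lemma stepP_iterate_C_mul (b a : ℝ) : ∀ (ν : ℕ) (p : ℝ[X]),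
    (stepP b)^[ν] (Polynomial.C a * p) = Polynomial.C a * (stepP b)^[ν] p
  | 0, p => by simp
  | (ν+1), p => by
      rw [Function.iterate_succ_apply, stepP_C_mul, stepP_iterate_C_mul b a ν,
        Function.iterate_succ_apply]

lemma exists_E (B : ℝ[X]) : ∀ ν : ℕ, ∃ E : ℕ → ℝ[X], ∀ b : ℝ,
    (stepP b)^[ν] B = ∑ r ∈ Finset.range (ν+1), Polynomial.C (b ^ r) * E r
  | 0 => ⟨fun _ => B, fun b => by simp⟩
  | (ν+1) => by
      obtain ⟨E, hE⟩ := exists_E B ν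
      refine ⟨fun r => (if r ≤ ν then Polynomial.derivative (E r) else 0) +
        (if r = 0 then 0 else E (r-1)), fun b => ?_⟩
      rw [Function.iterate_succ_apply', hE b]
      have hL : stepP b (∑ r ∈ Finset.range (ν+1), Polynomial.C (b^r) * E r)
          = (∑ r ∈ Finset.range (ν+1), Polynomial.C (b^r) * Polynomial.derivative (E r))
            + ∑ r ∈ Finset.range (ν+1), Polynomial.C (b^(r+1)) * E r := by
        simp only [stepP, map_sum, Polynomial.derivative_C_mul, Finset.mul_sum]
        congr 1
        apply Finset.sum_congr rfl
        intro r _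
        rw [← mul_assoc, ← Polynomial.C_mul, pow_succ, mul_comm (b^r) b]
      have hR1 : ∑ r ∈ Finset.range (ν+1+1), Polynomial.C (b^r) *
            ((if r ≤ ν then Polynomial.derivative (E r) else 0) + (if r = 0 then 0 else E (r-1)))
          = (∑ r ∈ Finset.range (ν+1+1), Polynomial.C (b^r) *
              (if r ≤ ν then Polynomial.derivative (E r) else 0))
            + ∑ r ∈ Finset.range (ν+1+1), Polynomial.C (b^r) *
              (if r = 0 then 0 else E (r-1)) := by
        rw [← Finset.sum_add_distrib]
        exact Finset.sum_congr rfl fun r _ => by ring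
      have e1 : (∑ r ∈ Finset.range (ν+1+1), Polynomial.C (b^r) *
            (if r ≤ ν then Polynomial.derivative (E r) else 0))
          = ∑ r ∈ Finset.range (ν+1), Polynomial.C (b^r) * Polynomial.derivative (E r) := by
        rw [Finset.sum_range_succ, if_neg (by omega : ¬ ν + 1 ≤ ν), mul_zero, add_zero]
        exact Finset.sum_congr rfl fun r hr => by
          rw [if_pos (Nat.lt_succ_iff.mp (Finset.mem_range.mp hr))]
      have e2 : (∑ r ∈ Finset.range (ν+1+1), Polynomial.C (b^r) *
            (if r = 0 then 0 else E (r-1)))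
          = ∑ r ∈ Finset.range (ν+1), Polynomial.C (b^(r+1)) * E r := by
        rw [Finset.sum_range_succ']
        simp [Nat.succ_ne_zero]
      rw [hL, hR1, e1, e2]

lemma mv_eval_line (r : MvPolynomial (Fin 2) ℝ) (v : Fin 2 → ℝ) (s : ℝ) :
    (MvPolynomial.aeval (fun k => Polynomial.C (v k) * Polynomial.X) r).eval s =
      MvPolynomial.eval (fun k => v k * s) r := by
  rw [MvPolynomial.aeval_def]
  have := MvPolynomial.eval₂_comp_left (Polynomial.evalRingHom s)
    (algebraMap ℝ (Polynomial ℝ)) (fun k => Polynomial.C (v k) * Polynomial.X) r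
  simp only [Polynomial.coe_evalRingHom] at this
  rw [this]
  have hhom : (Polynomial.evalRingHom s).comp (algebraMap ℝ (Polynomial ℝ)) =
      RingHom.id ℝ := by
    ext a
    simp
  rw [hhom]
  simp only [Function.comp_def, Polynomial.eval_mul, Polynomial.eval_C, Polynomial.eval_X]
  rfl

/-- If an element `P(α,β;t)` of the ring `R_{α,β}` (a linear combination of terms
`f(α,β) t^j e^{(n₁α + n₂β)t}` with rational coefficients `f = p/q`) has a pointwise limit
`g(t)` as `(α,β) → (0,0)` (within the set where the denominators do not vanish), then the
limit `g` is a polynomial in `t`. -/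
theorem limit_of_R_element_is_polynomial (N : ℕ)
    (p q : Fin N → MvPolynomial (Fin 2) ℝ) (hq : ∀ i, q i ≠ 0)
    (j : Fin N → ℕ) (n m : Fin N → ℤ)
    (S : Set (ℝ × ℝ)) (hS : S = {v | ∀ i, MvPolynomial.eval ![v.1, v.2] (q i) ≠ 0})
    (P : ℝ × ℝ → ℝ → ℝ)
    (hP : ∀ v t, P v t = ∑ i, (MvPolynomial.eval ![v.1, v.2] (p i) /
        MvPolynomial.eval ![v.1, v.2] (q i)) * t ^ j i *
        Real.exp (((n i : ℝ) * v.1 + (m i : ℝ) * v.2) * t))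
    (g : ℝ → ℝ)
    (hg : ∀ t, Tendsto (fun v => P v t) (nhdsWithin ((0, 0) : ℝ × ℝ) S) (nhds (g t))) :
    ∃ r : Polynomial ℝ, ∀ t, g t = r.eval t := by
  classical
  -- find a good direction
  obtain ⟨v, hv⟩ : ∃ v : Fin 2 → ℝ, ∀ i, MvPolynomial.eval v (q i) ≠ 0 := by
    have hprod : (∏ i, q i) ≠ 0 := Finset.prod_ne_zero_iff.mpr fun i _ => hq i
    by_contra hc
    push_neg at hc
    apply hprod
    apply MvPolynomial.funext
    intro x
    obtain ⟨i, hi⟩ := hc x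
    rw [MvPolynomial.eval_prod]
    simp only [map_zero]
    exact Finset.prod_eq_zero (Finset.mem_univ i) hi
  set line : Fin 2 → Polynomial ℝ := fun k => Polynomial.C (v k) * Polynomial.X with hline
  set Qi : Fin N → Polynomial ℝ := fun i => MvPolynomial.aeval line (q i) with hQi
  set Pi : Fin N → Polynomial ℝ := fun i => MvPolynomial.aeval line (p i) with hPi
  have hQiev : ∀ i s, (Qi i).eval s = MvPolynomial.eval (fun k => v k * s) (q i) :=
    fun i s => mv_eval_line (q i) v s
  have hPiev : ∀ i s, (Pi i).eval s = MvPolynomial.eval (fun k => v k * s) (p i) :=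
    fun i s => mv_eval_line (p i) v s
  have hQine : ∀ i, Qi i ≠ 0 := by
    intro i hzero
    apply hv i
    have := hQiev i 1
    rw [hzero] at this
    simp only [Polynomial.eval_zero] at this
    have hv1 : (fun k => v k * 1) = v := funext fun k => mul_one (v k)
    rw [hv1] at this
    exact this.symm
  -- eventual nonvanishing along the line
  have hev : ∀ᶠ s in 𝓝[>] (0:ℝ), ∀ i, (Qi i).eval s ≠ 0 := by
    rw [eventually_all]
    intro i
    have hfin : Set.Finite {x : ℝ | (Qi i).IsRoot x} :=
      Polynomial.finite_setOf_isRoot (hQine i)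
    have hclosed : IsClosed ({x : ℝ | (Qi i).IsRoot x} \ {0}) :=
      (hfin.subset Set.diff_subset).isClosed
    have h0 : (0:ℝ) ∈ ({x : ℝ | (Qi i).IsRoot x} \ {0})ᶜ := by
      simp
    have hmem : ({x : ℝ | (Qi i).IsRoot x} \ {0})ᶜ ∈ 𝓝 (0:ℝ) :=
      hclosed.isOpen_compl.mem_nhds h0
    filter_upwards [mem_nhdsWithin_of_mem_nhds hmem, self_mem_nhdsWithin] with s h1 h2
    intro heval
    exact h1 ⟨heval, ne_of_gt h2⟩
  -- path into S
  have harr : ∀ s : ℝ, (![v 0 * s, v 1 * s] : Fin 2 → ℝ) = fun k => v k * s := by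
    intro s; funext k; fin_cases k <;> simp
  have hpath : Tendsto (fun s : ℝ => (v 0 * s, v 1 * s)) (𝓝[>] (0:ℝ))
      (nhdsWithin ((0, 0) : ℝ × ℝ) S) := by
    rw [tendsto_nhdsWithin_iff]
    constructor
    · have hcont : Continuous fun s : ℝ => (v 0 * s, v 1 * s) :=
        (continuous_const.mul continuous_id).prodMk (continuous_const.mul continuous_id)
      have := (hcont.tendsto 0).mono_left (nhdsWithin_le_nhds (s := Set.Ioi (0:ℝ)))
      simpa using this
    · filter_upwards [hev] with s hs
      rw [hS]
      intro i
      rw [show (((v 0 * s, v 1 * s) : ℝ × ℝ).1) = v 0 * s from rfl,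
        show (((v 0 * s, v 1 * s) : ℝ × ℝ).2) = v 1 * s from rfl, harr s, ← hQiev]
      exact hs i
  -- denominators and numerators combined
  set Qprod : Polynomial ℝ := ∏ i, Qi i with hQprod
  have hQprodne : Qprod ≠ 0 := Finset.prod_ne_zero_iff.mpr fun i _ => hQine i
  set A : Fin N → Polynomial ℝ :=
    fun i => Pi i * ∏ i' ∈ Finset.univ.erase i, Qi i' with hA
  set c : Fin N → ℝ := fun i => (n i : ℝ) * v 0 + (m i : ℝ) * v 1 with hc
  set ν : ℕ := Qprod.rootMultiplicity 0 with hν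
  set R : Polynomial ℝ := Qprod /ₘ (Polynomial.X - Polynomial.C 0) ^ ν with hR
  have hu0 : R.eval 0 ≠ 0 :=
    Polynomial.eval_divByMonic_pow_rootMultiplicity_ne_zero 0 hQprodne
  set u0 : ℝ := R.eval 0 with hu0def
  have hfact : (Polynomial.X - Polynomial.C 0) ^ ν * R = Qprod :=
    Polynomial.pow_mul_divByMonic_rootMultiplicity_eq Qprod 0
  have hQev : ∀ s : ℝ, Qprod.eval s = s ^ ν * R.eval s := by
    intro s
    conv_lhs => rw [← hfact]
    simp
  -- the coefficient polynomials
  choose E hE using fun i => exists_E (A i) ν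
  refine ⟨Polynomial.C (1 / (u0 * ν !)) *
    ∑ i, ∑ r ∈ Finset.range (ν+1),
      Polynomial.C ((E i r).eval 0 * (c i)^r) * Polynomial.X ^ (j i + r), fun t => ?_⟩
  -- fix t
  set B : Fin N → Polynomial ℝ := fun i => Polynomial.C (t ^ j i) * A i with hB
  set β : Fin N → ℝ := fun i => c i * t with hβ
  set F : ℝ → ℝ := fun s => ∑ i, (B i).eval s * Real.exp (β i * s) with hF
  have htend : Tendsto (fun s => P (v 0 * s, v 1 * s) t) (𝓝[>] (0:ℝ)) (𝓝 (g t)) :=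
    (hg t).comp hpath
  have hclaim : ∀ᶠ s in 𝓝[>] (0:ℝ),
      P (v 0 * s, v 1 * s) t = F s / Qprod.eval s := by
    filter_upwards [hev] with s hs
    rw [hP]
    rw [show (((v 0 * s, v 1 * s) : ℝ × ℝ).1) = v 0 * s from rfl,
      show (((v 0 * s, v 1 * s) : ℝ × ℝ).2) = v 1 * s from rfl]
    rw [hF, Finset.sum_div]
    apply Finset.sum_congr rfl
    intro i _
    rw [harr s, ← hQiev, ← hPiev]
    have hprodsplit : Qprod.eval s = (Qi i).eval s *
        (∏ i' ∈ Finset.univ.erase i, Qi i').eval s := by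
      rw [hQprod, ← Polynomial.eval_mul, Finset.mul_prod_erase _ _ (Finset.mem_univ i)]
    have herasene : (∏ i' ∈ Finset.univ.erase i, Qi i').eval s ≠ 0 := by
      rw [Polynomial.eval_prod]
      exact Finset.prod_ne_zero_iff.mpr fun i' _ => hs i'
    have hBev : (B i).eval s = t ^ j i * ((Pi i).eval s *
        (∏ i' ∈ Finset.univ.erase i, Qi i').eval s) := by
      simp [hB, hA]
    rw [hBev, hprodsplit]
    have hexp : ((n i : ℝ) * (v 0 * s) + (m i : ℝ) * (v 1 * s)) * t = β i * s := by
      rw [hβ, hc]; ring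
    rw [hexp]
    rw [div_mul_eq_mul_div, div_mul_eq_mul_div,
      div_eq_div_iff (hs i) (mul_ne_zero (hs i) herasene)]
    ring
  have htendF : Tendsto (fun s => F s / Qprod.eval s) (𝓝[>] (0:ℝ)) (𝓝 (g t)) :=
    htend.congr' hclaim
  have hRcont : Tendsto (fun s => R.eval s) (𝓝[>] (0:ℝ)) (𝓝 u0) :=
    ((R.continuous_aeval).tendsto 0).mono_left nhdsWithin_le_nhds
  have hRne : ∀ᶠ s in 𝓝[>] (0:ℝ), R.eval s ≠ 0 := hRcont.eventually_ne hu0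
  have h5 : Tendsto (fun s => F s / s ^ ν) (𝓝[>] (0:ℝ)) (𝓝 (g t * u0)) := by
    have hmul := htendF.mul hRcont
    apply hmul.congr'
    filter_upwards [hRne, self_mem_nhdsWithin] with s hs1 hs2
    rw [hQev s, ← div_div, div_mul_cancel₀ _ hs1]
  have hkey : g t * u0 = iteratedDeriv ν F 0 / ν ! :=
    limit_eq_taylor_coeff (fsum_contDiff B β) ν _ h5
  have hder : iteratedDeriv ν F 0 =
      ∑ i, (t ^ j i) * ∑ r ∈ Finset.range (ν+1), (β i)^r * (E i r).eval 0 := by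
    rw [hF, fsum_iteratedDeriv]
    simp only [mul_zero, Real.exp_zero, mul_one]
    apply Finset.sum_congr rfl
    intro i _
    rw [hB, stepP_iterate_C_mul, hE i (β i)]
    simp [Finset.mul_sum, Polynomial.eval_finset_sum, Polynomial.eval_mul,
      Polynomial.eval_pow, Polynomial.eval_C]
  -- final identification
  have hfac_ne : (ν ! : ℝ) ≠ 0 := Nat.cast_ne_zero.mpr (Nat.factorial_ne_zero ν)
  have hgt : g t = (∑ i, (t ^ j i) *
      ∑ r ∈ Finset.range (ν+1), (β i)^r * (E i r).eval 0) / ν ! / u0 := by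
    rw [← hder, ← hkey]
    field_simp
  rw [hgt]
  simp only [Polynomial.eval_mul, Polynomial.eval_C, Polynomial.eval_finset_sum,
    Polynomial.eval_pow, Polynomial.eval_X]
  rw [Finset.mul_sum, div_div, div_eq_iff (mul_ne_zero hfac_ne hu0)]
  rw [Finset.sum_mul]
  apply Finset.sum_congr rfl
  intro i _
  rw [hβ]
  simp only [Finset.mul_sum, Finset.sum_mul]
  apply Finset.sum_congr rfl
  intro r _
  simp only [mul_pow, pow_add]
  field_simp
end

section
/- (Weierstrass division, formal category.) Let σ be a finite type and let R = ℝ⟦u₂,…⟧ denote the ring of multivariate formal power series over ℝ in variables indexed by σ, so that a formal power series in the variables (u₁, u_σ) is an element of R⟦u₁⟧, the ring of formal power series in u₁ with coefficients in R. Let f ∈ R⟦u₁⟧ and let f̄ ∈ ℝ⟦u₁⟧ be the series obtained from f by applying the constant-coefficient homomorphism R → ℝ to each coefficient (i.e. f̄(u₁) = f(u₁, 0)). Assume f̄ = u₁^m · ḡ for some m ∈ ℕ and some ḡ ∈ ℝ⟦u₁⟧ with ḡ(0) ≠ 0 (equivalently, f̄ has order exactly m). Then for every F ∈ R⟦u₁⟧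 there exist a unique q ∈ R⟦u₁⟧ and a unique polynomial r ∈ R[u₁] of degree strictly less than m such that F = r + q·f. -/
open PowerSeries

namespace WDAux

variable {σ : Type}

/-- degree of a monomial -/
def degC (d : σ →₀ ℕ) : ℕ := d.sum fun _ e => e

lemma degC_add (d₁ d₂ : σ →₀ ℕ) : degC (d₁ + d₂) = degC d₁ + degC d₂ :=
  Finsupp.sum_add_index' (fun _ => rfl) (fun _ _ _ => rfl)

lemma degC_pos {d : σ →₀ ℕ} (hd : d ≠ 0) : 1 ≤ degC d := by
  rcases Nat.eq_zero_or_pos (degC d) with h | h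
  · exfalso; apply hd
    ext a
    by_contra ha
    simp only [Finsupp.coe_zero, Pi.zero_apply] at ha ⊢
    have hmem : a ∈ d.support := Finsupp.mem_support_iff.2 ha
    have h5 : d a ≤ degC d := by
      unfold degC Finsupp.sum
      exact Finset.single_le_sum (fun _ _ => Nat.zero_le _) hmem
    omega
  · exact h

/-- coefficients vanish below total degree `k` -/
def Lo (k : ℕ) (x : PowerSeries (MvPowerSeries σ ℝ)) : Prop :=
  ∀ (n : ℕ) (d : σ →₀ ℕ), degC d < k →
    MvPowerSeries.coeff d (PowerSeries.coeff n x) = 0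

lemma lo_zero (k : ℕ) : Lo (σ := σ) k 0 := by intro n d _; simp

lemma lo_mono {k k' : ℕ} (h : k ≤ k') {x : PowerSeries (MvPowerSeries σ ℝ)}
    (hx : Lo k' x) : Lo k x := fun n d hd => hx n d (lt_of_lt_of_le hd h)

lemma lo_neg {k : ℕ} {x : PowerSeries (MvPowerSeries σ ℝ)} (hx : Lo k x) : Lo k (-x) := by
  intro n d hd; simp [hx n d hd]

lemma lo_add {k : ℕ} {x y : PowerSeries (MvPowerSeries σ ℝ)} (hx : Lo k x) (hy : Lo k y) :
    Lo k (x + y) := by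
  intro n d hd; simp [hx n d hd, hy n d hd]

/-- shift down by `m` -/
noncomputable def tau (m : ℕ) (x : PowerSeries (MvPowerSeries σ ℝ)) :
    PowerSeries (MvPowerSeries σ ℝ) :=
  PowerSeries.mk fun n => PowerSeries.coeff (n + m) x

@[simp] lemma coeff_tau (m n : ℕ) (x : PowerSeries (MvPowerSeries σ ℝ)) :
    PowerSeries.coeff n (tau m x) = PowerSeries.coeff (n + m) x := coeff_mk _ _

lemma tau_sub (m : ℕ) (x y : PowerSeries (MvPowerSeries σ ℝ)) :
    tau m (x - y) = tau m x - tau m y := by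
  ext n; simp

lemma tau_add (m : ℕ) (x y : PowerSeries (MvPowerSeries σ ℝ)) :
    tau m (x + y) = tau m x + tau m y := by
  ext n; simp

lemma lo_tau {k : ℕ} (m : ℕ) {x : PowerSeries (MvPowerSeries σ ℝ)} (hx : Lo k x) :
    Lo k (tau m x) := by
  intro n d hd; simpa using hx (n + m) d hd

lemma lo_mul {k : ℕ} {b x : PowerSeries (MvPowerSeries σ ℝ)} (hb : Lo 1 b) (hx : Lo k x) :
    Lo (k + 1) (b * x) := by
  classical
  intro n d hd
  rw [PowerSeries.coeff_mul, map_sum]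
  apply Finset.sum_eq_zero
  rintro ⟨i, j⟩ _
  rw [MvPowerSeries.coeff_mul]
  apply Finset.sum_eq_zero
  rintro ⟨e₁, e₂⟩ he
  rw [Finset.HasAntidiagonal.mem_antidiagonal] at he
  by_cases h1 : e₁ = 0
  · subst h1
    have := hb i 0 (by simp [degC])
    rw [this, zero_mul]
  · have h2 : degC e₂ < k := by
      have h3 := degC_pos h1
      have h4 : degC e₁ + degC e₂ = degC d := by rw [← degC_add, he]
      omega
    rw [hx j e₂ h2, mul_zero]

variable (m : ℕ) (b c : PowerSeries (MvPowerSeries σ ℝ))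

/-- iterates approximating the fixed point of `s ↦ c - τ(b s)` -/
noncomputable def S : ℕ → PowerSeries (MvPowerSeries σ ℝ)
  | 0 => 0
  | K + 1 => c - tau m (b * S K)

variable {hbdummy : True}

lemma lo_D (hb : Lo 1 b) : ∀ K, Lo K (S m b c (K + 1) - S m b c K) := by
  intro K
  induction K with
  | zero => exact fun n d hd => absurd hd (by omega)
  | succ K ih =>
    have : S m b c (K + 2) - S m b c (K + 1)
        = -(tau m (b * (S m b c (K + 1) - S m b c K))) := by
      show (c - tau m (b * S m b c (K+1))) - (c - tau m (b * S m b c K)) = _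
      rw [mul_sub, tau_sub]; ring
    rw [this]
    exact lo_neg (lo_tau m (lo_mul hb ih))

lemma lo_S_sub (hb : Lo 1 b) {K K' : ℕ} (h : K ≤ K') : Lo K (S m b c K' - S m b c K) := by
  induction K' with
  | zero => have : K = 0 := by omega
            subst this; simpa using lo_zero 0
  | succ K' ih =>
    rcases Nat.lt_or_ge K (K' + 1) with h' | h'
    · have hK : K ≤ K' := by omega
      have h1 := ih hK
      have h2 := lo_mono hK (lo_D m b c hb K')
      have : S m b c (K' + 1) - S m b c K
          = (S m b c (K' + 1) - S m b c K') + (S m b c K' - S m b c K) := by ring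
      rw [this]; exact lo_add h2 h1
    · have : K = K' + 1 := by omega
      subst this; simpa using lo_zero (K' + 1)

/-- the limit of the iterates -/
noncomputable def slim : PowerSeries (MvPowerSeries σ ℝ) :=
  PowerSeries.mk fun n =>
    (fun d => MvPowerSeries.coeff d
      (PowerSeries.coeff n (S m b c (degC d + 1))) : MvPowerSeries σ ℝ)

lemma coeff_slim (n : ℕ) (d : σ →₀ ℕ) :
    MvPowerSeries.coeff d (PowerSeries.coeff n (slim m b c))
      = MvPowerSeries.coeff d (PowerSeries.coeff n (S m b c (degC d + 1))) := by
  erw [slim, coeff_mk]; rfl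

lemma coeff_slim_stable (hb : Lo 1 b) (K n : ℕ) (d : σ →₀ ℕ) (hd : degC d < K) :
    MvPowerSeries.coeff d (PowerSeries.coeff n (slim m b c))
      = MvPowerSeries.coeff d (PowerSeries.coeff n (S m b c K)) := by
  rw [coeff_slim]
  rcases le_total (degC d + 1) K with h | h
  · have := lo_S_sub m b c hb h n d (by omega)
    simp only [map_sub] at this
    linarith [this]
  · have := lo_S_sub m b c hb h n d hd
    simp only [map_sub] at this
    linarith [this]

lemma lo_slim_sub (hb : Lo 1 b) (K : ℕ) : Lo K (slim m b c - S m b c K) := by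
  intro n d hd
  simp only [map_sub]
  rw [coeff_slim_stable m b c hb K n d hd, sub_self]

lemma slim_fixed (hb : Lo 1 b) : slim m b c = c - tau m (b * slim m b c) := by
  ext n d
  set k := degC d + 1 with hk
  have h1 := coeff_slim_stable m b c hb (k + 1) n d (by omega)
  have h2 : S m b c (k + 1) = c - tau m (b * S m b c k) := rfl
  rw [h1, h2]
  have h3 : Lo (k + 1) (tau m (b * slim m b c) - tau m (b * S m b c k)) := by
    have : tau m (b * slim m b c) - tau m (b * S m b c k)
        = tau m (b * (slim m b c - S m b c k)) := by rw [mul_sub, tau_sub]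
    rw [this]
    exact lo_tau m (lo_mul hb (lo_slim_sub m b c hb k))
  have h4 := h3 n d (by omega)
  simp only [map_sub] at h4 ⊢
  linarith [h4]

lemma fixed_unique (hb : Lo 1 b) {t t' : PowerSeries (MvPowerSeries σ ℝ)}
    (ht : t = c - tau m (b * t)) (ht' : t' = c - tau m (b * t')) : t = t' := by
  have key : ∀ K, Lo K (t - t') := by
    intro K
    induction K with
    | zero => exact fun n d hd => absurd hd (by omega)
    | succ K ih =>
      have : t - t' = -(tau m (b * (t - t'))) := by
        rw [mul_sub, tau_sub]
        nth_rewrite 1 [ht, ht']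
        ring
      rw [this]
      exact lo_neg (lo_tau m (lo_mul hb ih))
  have : t - t' = 0 := by
    ext n d
    have := key (degC d + 1) n d (by omega)
    simpa using this
  exact sub_eq_zero.mp this

end WDAux

open WDAux in
/-- Weierstrass division in the formal category: if the restriction `f̄(u₁) = f(u₁,0)` of
`f ∈ R⟦u₁⟧` (where `R = ℝ⟦u_σ⟧`) has order exactly `m`, i.e. `f̄ = u₁^m ḡ` with `ḡ(0) ≠ 0`,
then every `F ∈ R⟦u₁⟧` can be uniquely written as `F = r + q f` with `q ∈ R⟦u₁⟧` and
`r ∈ R[u₁]` a polynomial of degree `< m`. -/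
theorem weierstrass_division_formal (σ : Type) [Finite σ] (m : ℕ)
    (f : PowerSeries (MvPowerSeries σ ℝ))
    (hf : ∃ g : PowerSeries ℝ, PowerSeries.constantCoeff (R := ℝ) g ≠ 0 ∧
      PowerSeries.map (MvPowerSeries.constantCoeff (σ := σ) (R := ℝ)) f = PowerSeries.X ^ m * g) :
    ∀ F : PowerSeries (MvPowerSeries σ ℝ),
      ∃! qr : PowerSeries (MvPowerSeries σ ℝ) × Polynomial (MvPowerSeries σ ℝ),
        qr.2.degree < (m : WithBot ℕ) ∧
        F = (qr.2 : PowerSeries (MvPowerSeries σ ℝ)) + qr.1 * f := by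
  classical
  obtain ⟨g, hg0, hfg⟩ := hf
  intro F
  set h : PowerSeries (MvPowerSeries σ ℝ) := WDAux.tau m f with hhdef
  set flow : PowerSeries (MvPowerSeries σ ℝ) :=
    PowerSeries.mk (fun n => if n < m then PowerSeries.coeff n f else 0) with hflowdef
  have hdecomp : f = flow + PowerSeries.X ^ m * h := by
    apply PowerSeries.ext
    intro n
    rw [map_add, PowerSeries.coeff_X_pow_mul']
    by_cases hn : n < m
    · rw [if_neg (by omega), hflowdef, PowerSeries.coeff_mk, if_pos hn, add_zero]
    · have hm : m ≤ n := by omega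
      rw [if_pos hm, hflowdef, PowerSeries.coeff_mk, if_neg hn, zero_add, hhdef,
        WDAux.coeff_tau, Nat.sub_add_cancel hm]
  have hlowf : ∀ n < m, MvPowerSeries.constantCoeff (σ := σ) (R := ℝ) (PowerSeries.coeff n f) = 0 := by
    intro n hn
    have h1 : PowerSeries.coeff n (PowerSeries.map (MvPowerSeries.constantCoeff (σ := σ) (R := ℝ)) f)
        = 0 := by
      rw [hfg, PowerSeries.coeff_X_pow_mul', if_neg (by omega)]
    simpa [PowerSeries.coeff_map] using h1
  have hflow : WDAux.Lo 1 flow := by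
    intro n d hd
    have hd0 : d = 0 := by
      by_contra h0
      have := WDAux.degC_pos h0
      omega
    subst hd0
    rw [MvPowerSeries.coeff_zero_eq_constantCoeff_apply, hflowdef, PowerSeries.coeff_mk]
    by_cases hn : n < m
    · rw [if_pos hn]; exact hlowf n hn
    · rw [if_neg hn]; simp
  have hunit : IsUnit h := by
    rw [PowerSeries.isUnit_iff_constantCoeff, MvPowerSeries.isUnit_iff_constantCoeff]
    have h1 : PowerSeries.constantCoeff h = PowerSeries.coeff m f := by
      rw [← PowerSeries.coeff_zero_eq_constantCoeff_apply, hhdef, WDAux.coeff_tau, zero_add]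
    have h2 : MvPowerSeries.constantCoeff (σ := σ) (R := ℝ) (PowerSeries.coeff m f)
        = PowerSeries.constantCoeff g := by
      have h3 := congrArg (PowerSeries.coeff m) hfg
      rw [PowerSeries.coeff_map] at h3
      rw [h3]
      have h4 := PowerSeries.coeff_X_pow_mul g m 0
      rw [zero_add] at h4
      rw [h4, PowerSeries.coeff_zero_eq_constantCoeff_apply]
    rw [h1, h2]
    exact isUnit_iff_ne_zero.2 hg0
  obtain ⟨u, hu⟩ := hunit
  set v : PowerSeries (MvPowerSeries σ ℝ) := ↑u⁻¹ with hvdef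
  have hvh : v * h = 1 := by
    rw [hvdef, ← hu]
    exact_mod_cast u.inv_mul
  set b := flow * v with hbdef
  have hb : WDAux.Lo 1 b := by
    have h0 : WDAux.Lo 0 v := fun n d hd => absurd hd (by omega)
    have := WDAux.lo_mul hflow h0
    simpa using this
  have hsfix := WDAux.slim_fixed m b (WDAux.tau m F) hb
  set s := WDAux.slim m b (WDAux.tau m F) with hsdef
  set q := v * s with hqdef
  have hqf : q * f = b * s + PowerSeries.X ^ m * s := by
    calc q * f = flow * v * s + PowerSeries.X ^ m * s * (v * h) := by
          rw [hqdef, hdecomp]; ring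
    _ = b * s + PowerSeries.X ^ m * s := by rw [hvh, mul_one, ← hbdef]
  have hkey : F = ↑(PowerSeries.trunc m (F - b * s)) + q * f := by
    rw [hqf]
    apply PowerSeries.ext
    intro n
    rw [map_add, map_add, Polynomial.coeff_coe, PowerSeries.coeff_trunc]
    by_cases hn : n < m
    · rw [if_pos hn]
      have h0 : PowerSeries.coeff n (PowerSeries.X ^ m * s) = 0 := by
        rw [PowerSeries.coeff_X_pow_mul', if_neg (by omega)]
      rw [h0, map_sub]
      ring
    · rw [if_neg hn]
      have hm : m ≤ n := le_of_not_gt hn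
      have h1 : PowerSeries.coeff n (PowerSeries.X ^ m * s)
          = PowerSeries.coeff (n - m) s := by
        rw [PowerSeries.coeff_X_pow_mul', if_pos hm]
      have h2 := congrArg (PowerSeries.coeff (n - m)) hsfix
      rw [map_sub, WDAux.coeff_tau, WDAux.coeff_tau, Nat.sub_add_cancel hm] at h2
      rw [h1, h2]
      ring
  have huniv : ∀ Q : PowerSeries (MvPowerSeries σ ℝ), ∀ P : Polynomial (MvPowerSeries σ ℝ),
      P.degree < (m : WithBot ℕ) → F = ↑P + Q * f →
      h * Q = WDAux.tau m F - WDAux.tau m (b * (h * Q)) := by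
    intro Q P hP hFP
    have htauP : WDAux.tau m (↑P : PowerSeries (MvPowerSeries σ ℝ)) = 0 := by
      apply PowerSeries.ext
      intro n
      rw [WDAux.coeff_tau, Polynomial.coeff_coe, map_zero]
      apply Polynomial.coeff_eq_zero_of_degree_lt
      refine lt_of_lt_of_le hP ?_
      exact_mod_cast Nat.cast_le.2 (by omega : m ≤ n + m)
    have hQ : Q = v * (h * Q) := by rw [← mul_assoc, hvh, one_mul]
    have hexp : F = (↑P : PowerSeries (MvPowerSeries σ ℝ)) + b * (h * Q) + PowerSeries.X ^ m * (h * Q) := by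
      calc F = (↑P : PowerSeries (MvPowerSeries σ ℝ)) + Q * f := hFP
      _ = (↑P : PowerSeries (MvPowerSeries σ ℝ))
          + (v * (h * Q)) * (flow + PowerSeries.X ^ m * h) := by rw [← hQ, ← hdecomp]
      _ = (↑P : PowerSeries (MvPowerSeries σ ℝ))
          + (flow * v) * (h * Q) + PowerSeries.X ^ m * (h * Q) * (v * h) := by ring
      _ = (↑P : PowerSeries (MvPowerSeries σ ℝ))
          + b * (h * Q) + PowerSeries.X ^ m * (h * Q) := by
          rw [hvh, mul_one, ← hbdef]
    have htau := congrArg (WDAux.tau m) hexp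
    rw [WDAux.tau_add, WDAux.tau_add, htauP, zero_add] at htau
    have hXm : WDAux.tau m (PowerSeries.X ^ m * (h * Q)) = h * Q := by
      apply PowerSeries.ext
      intro n
      rw [WDAux.coeff_tau, PowerSeries.coeff_X_pow_mul]
    rw [hXm] at htau
    rw [htau]
    ring
  refine ⟨(q, PowerSeries.trunc m (F - b * s)),
    ⟨PowerSeries.degree_trunc_lt _ _, hkey⟩, ?_⟩
  rintro ⟨Q, P⟩ ⟨hP, hFP⟩
  have hfixQ := huniv Q P hP hFP
  have hfixs : s = WDAux.tau m F - WDAux.tau m (b * s) := hsfix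
  have hQs : h * Q = s := WDAux.fixed_unique m b (WDAux.tau m F) hb hfixQ hfixs
  have hQq : Q = q := by
    have h1 : Q = v * (h * Q) := by rw [← mul_assoc, hvh, one_mul]
    rw [h1, hQs, hqdef]
  have hPr : P = PowerSeries.trunc m (F - b * s) := by
    apply (Polynomial.coe_inj).1
    have h2 : (↑P : PowerSeries (MvPowerSeries σ ℝ)) + q * f
        = ↑(PowerSeries.trunc m (F - b * s)) + q * f := by
      rw [← hkey, ← hQq, ← hFP]
    exact add_right_cancel h2
  exact Prod.ext hQq hPr
end

section
/- Fix α, β, c ∈ ℝ, m ∈ ℕ, x₀ ∈ ℝ with 0 < x₀, and y₀, z₀ ∈ ℝ; set γ = α − mβ and let ω(γ,x) = (x^{−γ} − 1)/γ if γ ≠ 0 and ω(0,x) = −ln x. Suppose φ_x, φ_y, φ_z : ℝ → ℝ satisfy, for every t ∈ ℝ, φ_x′(t) = φ_x(t), φ_y′(t) = −α φ_y(t) + c φ_z(t)^m, φ_z′(t) = −β φ_z(t), together with the initial condition (φ_x(0), φ_y(0), φ_z(0)) = (x₀, y₀, z₀). Then at the transition time t₁ = −ln x₀ one has φ_x(t₁)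 = 1, φ_y(t₁) = x₀^{α}( y₀ + c z₀^m ω(γ, x₀) ), and φ_z(t₁) = x₀^{β} z₀. -/
/-- The Dulac map of the resonant normal form system `ẋ = x`, `ẏ = −αy + c z^m`, `ż = −βz`:
a solution starting at `(x₀, y₀, z₀)` with `0 < x₀` reaches the section `{x = 1}` at time
`t₁ = −ln x₀`, where `y = x₀^α (y₀ + c z₀^m ω(γ, x₀))` and `z = x₀^β z₀`,
with `γ = α − mβ` and `ω` the compensator function. -/
theorem dulac_map_resonant_normal_form (α β c : ℝ) (m : ℕ)
    (x₀ : ℝ) (hx₀ : 0 < x₀) (y₀ z₀ : ℝ) (γ : ℝ) (hγ : γ = α - m * β)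
    (ω : ℝ → ℝ → ℝ)
    (hω : ∀ g x : ℝ, ω g x = if g ≠ 0 then (x ^ (-g) - 1) / g else -Real.log x)
    (φx φy φz : ℝ → ℝ)
    (hode : ∀ t : ℝ,
      HasDerivAt φx (φx t) t ∧
      HasDerivAt φy (-α * φy t + c * φz t ^ m) t ∧
      HasDerivAt φz (-β * φz t) t)
    (hinit : φx 0 = x₀ ∧ φy 0 = y₀ ∧ φz 0 = z₀) :
    φx (-Real.log x₀) = 1 ∧
    φy (-Real.log x₀) = x₀ ^ α * (y₀ + c * z₀ ^ m * ω γ x₀) ∧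
    φz (-Real.log x₀) = x₀ ^ β * z₀ := by
  obtain ⟨hx0, hy0, hz0⟩ := hinit
  have key : ∀ (f : ℝ → ℝ), (∀ t, HasDerivAt f 0 t) → ∀ t, f t = f 0 := by
    intro f hf t
    exact is_const_of_deriv_eq_zero (fun x => (hf x).differentiableAt)
      (fun x => (hf x).deriv) t 0
  have hexp : ∀ (k s : ℝ), HasDerivAt (fun u => Real.exp (k * u)) (k * Real.exp (k * s)) s := by
    intro k s
    have := (Real.hasDerivAt_exp (k * s)).comp s ((hasDerivAt_id s).const_mul k)
    exact this.congr_deriv (by ring)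
  -- z component
  have hz : ∀ t, φz t = z₀ * Real.exp (-β * t) := by
    intro t
    have h1 : ∀ s, HasDerivAt (fun u => φz u * Real.exp (β * u)) 0 s := by
      intro s
      have := ((hode s).2.2).mul (hexp β s)
      exact this.congr_deriv (by ring)
    have h2 := key _ h1 t
    simp only [mul_zero, Real.exp_zero, mul_one, hz0] at h2
    have hep : Real.exp (β * t) ≠ 0 := Real.exp_ne_zero _
    field_simp [Real.exp_neg, neg_mul] at *
    rw [← h2, mul_assoc, ← Real.exp_add]; simp
  -- x component
  have hx : ∀ t, φx t = x₀ * Real.exp t := by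
    intro t
    have h1 : ∀ s, HasDerivAt (fun u => φx u * Real.exp (-u)) 0 s := by
      intro s
      have he : HasDerivAt (fun u : ℝ => Real.exp (-u)) (-1 * Real.exp (-1 * s)) s := by
        simpa [neg_mul, one_mul] using hexp (-1) s
      have := ((hode s).1).mul he
      refine this.congr_deriv ?_
      ring_nf
    have h2 := key _ h1 t
    simp only [neg_zero, Real.exp_zero, mul_one, hx0] at h2
    have hep : Real.exp (-t) ≠ 0 := Real.exp_ne_zero _
    have : φx t = x₀ / Real.exp (-t) := by
      field_simp
      linarith [h2]
    rw [this, Real.exp_neg]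
    field_simp
  -- y component
  set E : ℝ → ℝ := fun t => if γ ≠ 0 then (Real.exp (γ * t) - 1) / γ else t with hE
  have hEderiv : ∀ t, HasDerivAt E (Real.exp (γ * t)) t := by
    intro t
    by_cases hg : γ = 0
    · simp only [hE, hg, ne_eq, not_true_eq_false, if_false, zero_mul, Real.exp_zero]
      exact hasDerivAt_id' t
    · have h1 : HasDerivAt (fun u => (Real.exp (γ * u) - 1) / γ)
          ((γ * Real.exp (γ * t)) / γ) t := ((hexp γ t).sub_const 1).div_const γ
      have h2 : (γ * Real.exp (γ * t)) / γ = Real.exp (γ * t) := by field_simp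
      rw [h2] at h1
      have : E = fun u => (Real.exp (γ * u) - 1) / γ := by
        funext u; simp [hE, hg]
      rw [this]; exact h1
  have hy : ∀ t, φy t = (y₀ + c * z₀ ^ m * E t) * Real.exp (-α * t) := by
    intro t
    have h1 : ∀ s, HasDerivAt (fun u => φy u * Real.exp (α * u) - c * z₀ ^ m * E u) 0 s := by
      intro s
      have hmain := (((hode s).2.1).mul (hexp α s)).sub ((hEderiv s).const_mul (c * z₀ ^ m))
      refine hmain.congr_deriv ?_
      have hzs : φz s ^ m = z₀ ^ m * Real.exp (-β * s) ^ m := by rw [hz s, mul_pow]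
      have hexps : Real.exp (-β * s) ^ m * Real.exp (α * s) = Real.exp (γ * s) := by
        rw [← Real.exp_nat_mul, ← Real.exp_add, hγ]
        ring_nf
      linear_combination (c * Real.exp (α * s)) * hzs + (c * z₀ ^ m) * hexps
    have h2 := key _ h1 t
    have hE0 : E 0 = 0 := by by_cases hg : γ = 0 <;> simp [hE, hg]
    simp only [mul_zero, Real.exp_zero, mul_one, hy0, hE0, sub_zero] at h2
    have hep : Real.exp (α * t) ≠ 0 := Real.exp_ne_zero _
    have : φy t = (y₀ + c * z₀ ^ m * E t) / Real.exp (α * t) := by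
      field_simp
      linarith [h2]
    rw [this, neg_mul, Real.exp_neg]
    field_simp
  -- conclusions
  have hel : Real.exp (-Real.log x₀) = x₀⁻¹ := by
    rw [Real.exp_neg, Real.exp_log hx₀]
  refine ⟨?_, ?_, ?_⟩
  · rw [hx, hel]; field_simp
  · rw [hy, hω]
    have h1 : Real.exp (-α * -Real.log x₀) = x₀ ^ α := by
      rw [Real.rpow_def_of_pos hx₀]; ring_nf
    have h2 : E (-Real.log x₀) = if γ ≠ 0 then (x₀ ^ (-γ) - 1) / γ else -Real.log x₀ := by
      by_cases hg : γ = 0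
      · simp [hE, hg]
      · simp only [hE, hg, ne_eq, not_false_eq_true, if_true]
        rw [Real.rpow_def_of_pos hx₀]
        ring_nf
    rw [h1, h2]; ring
  · rw [hz]
    have : Real.exp (-β * -Real.log x₀) = x₀ ^ β := by
      rw [Real.rpow_def_of_pos hx₀]; ring_nf
    rw [this]; ring
end

section
/- Let G : ℝ → ℝ be a C^∞ function that is flat at 0, i.e. G and all of its iterated derivatives vanish at 0, and let m ∈ ℕ. Define h : ℝ → ℝ by h(x) = G(x)/x^m for x ≠ 0 and h(0) = 0. Then h is C^∞ on ℝ and h is again flat at 0 (all iterated derivatives of h vanish at 0). -/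
open Filter Topology Set

private noncomputable def qq (G : ℝ → ℝ) (m : ℕ) : ℝ → ℝ := fun x => if x = 0 then 0 else G x / x ^ m

private lemma qq_zero (G : ℝ → ℝ) (m : ℕ) : qq G m 0 = 0 := if_pos rfl

private lemma smooth_nat {G : ℝ → ℝ} (hG : ContDiff ℝ (⊤ : ℕ∞) G) (n : ℕ) :
    ContDiff ℝ n G := hG.of_le (by exact_mod_cast le_top)

private lemma deriv_smooth {G : ℝ → ℝ} (hG : ContDiff ℝ (⊤ : ℕ∞) G) :
    ContDiff ℝ (⊤ : ℕ∞) (deriv G) := (contDiff_infty_iff_deriv.mp hG).2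

private lemma deriv_flat {G : ℝ → ℝ} (hflat : ∀ n : ℕ, iteratedDeriv n G 0 = 0) (n : ℕ) :
    iteratedDeriv n (deriv G) 0 = 0 := by
  have := hflat (n + 1)
  rwa [iteratedDeriv_succ'] at this

private lemma G_diff {G : ℝ → ℝ} (hG : ContDiff ℝ (⊤ : ℕ∞) G) : Differentiable ℝ G :=
  hG.differentiable (by simp)

/-- L'Hôpital-based limit: `G x / x ^ m → 0`. -/
private lemma tendsto_aux (m : ℕ) : ∀ G : ℝ → ℝ, ContDiff ℝ (⊤ : ℕ∞) G →
    (∀ n : ℕ, iteratedDeriv n G 0 = 0) →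
    Tendsto (fun x => G x / x ^ m) (𝓝[≠] (0 : ℝ)) (𝓝 0) := by
  induction m with
  | zero =>
    intro G hG hf
    simp only [pow_zero, div_one]
    have h0 : G 0 = 0 := by simpa [iteratedDeriv_zero] using hf 0
    have := (hG.continuous.tendsto 0).mono_left (nhdsWithin_le_nhds (s := {(0:ℝ)}ᶜ))
    rwa [h0] at this
  | succ m ih =>
    intro G hG hf
    have hd := ih (deriv G) (deriv_smooth hG) (deriv_flat hf)
    have h0 : G 0 = 0 := by simpa [iteratedDeriv_zero] using hf 0
    apply HasDerivAt.lhopital_zero_nhdsNE (f' := deriv G)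
      (g' := fun x => ((m : ℝ) + 1) * x ^ m)
    · exact Eventually.of_forall fun x => (G_diff hG x).hasDerivAt
    · refine Eventually.of_forall fun x => ?_
      simpa using hasDerivAt_pow (m + 1) x
    · filter_upwards [self_mem_nhdsWithin] with x hx
      exact mul_ne_zero (by positivity) (pow_ne_zero m hx)
    · have := (hG.continuous.tendsto 0).mono_left (nhdsWithin_le_nhds (s := {(0:ℝ)}ᶜ))
      rwa [h0] at this
    · have : Tendsto (fun x : ℝ => x ^ (m + 1)) (𝓝 0) (𝓝 (0 ^ (m + 1) : ℝ)) :=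
        (continuous_pow (m + 1)).tendsto 0
      simpa using this.mono_left (nhdsWithin_le_nhds (s := {(0:ℝ)}ᶜ))
    · have : Tendsto (fun x => deriv G x / x ^ m / ((m : ℝ) + 1)) (𝓝[≠] (0 : ℝ)) (𝓝 0) := by
        simpa using hd.div_const ((m : ℝ) + 1)
      refine this.congr fun x => ?_
      rw [div_div, mul_comm]

private lemma it_add {f g : ℝ → ℝ} (hf : ContDiff ℝ (⊤ : ℕ∞) f) (hg : ContDiff ℝ (⊤ : ℕ∞) g)
    (n : ℕ) (x : ℝ) :
    iteratedDeriv n (fun y => f y + g y) x = iteratedDeriv n f x + iteratedDeriv n g x := by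
  have : (fun y => f y + g y) = f + g := rfl
  rw [this, iteratedDeriv_eq_iteratedFDeriv, iteratedDeriv_eq_iteratedFDeriv,
    iteratedDeriv_eq_iteratedFDeriv, iteratedFDeriv_add_apply (smooth_nat hf n).contDiffAt (smooth_nat hg n).contDiffAt]
  rfl

/-- If `f` is smooth and flat at `0`, so is `x * f x`. -/
private lemma flat_id_mul : ∀ n : ℕ, ∀ f : ℝ → ℝ, ContDiff ℝ (⊤ : ℕ∞) f →
    (∀ k : ℕ, iteratedDeriv k f 0 = 0) → iteratedDeriv n (fun x => x * f x) 0 = 0 := by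
  intro n
  induction n with
  | zero => intro f hf hfl; simpa [iteratedDeriv_zero] using by ring
  | succ n ih =>
    intro f hf hfl
    rw [iteratedDeriv_succ']
    have hder : deriv (fun x => x * f x) = fun x => f x + x * deriv f x := by
      funext x
      have h1 : HasDerivAt (fun y : ℝ => y) 1 x := hasDerivAt_id' x
      have h2 : HasDerivAt (fun y => y * f y) (1 * f x + x * deriv f x) x :=
        h1.mul (G_diff hf x).hasDerivAt
      rw [h2.deriv]
      ring
    have hg : ContDiff ℝ (⊤ : ℕ∞) (fun x => x * deriv f x) :=
      contDiff_id.mul (deriv_smooth hf)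
    rw [hder, it_add hf hg n 0, hfl n,
      ih (deriv f) (deriv_smooth hf) (deriv_flat hfl)]
    ring

private lemma it_cmul {f : ℝ → ℝ} (hf : ContDiff ℝ (⊤ : ℕ∞) f) (c : ℝ) (n : ℕ) (x : ℝ) :
    iteratedDeriv n (fun y => c * f y) x = c * iteratedDeriv n f x := by
  have : (fun y => c * f y) = c • f := by funext y; simp [smul_eq_mul]
  rw [this, iteratedDeriv_eq_iteratedFDeriv, iteratedDeriv_eq_iteratedFDeriv,
    iteratedFDeriv_const_smul_apply (smooth_nat hf n).contDiffAt]
  rfl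

private lemma H_smooth {G : ℝ → ℝ} (hG : ContDiff ℝ (⊤ : ℕ∞) G) (m : ℕ) :
    ContDiff ℝ (⊤ : ℕ∞) (fun x => x * deriv G x - (m : ℝ) * G x) :=
  (contDiff_id.mul (deriv_smooth hG)).sub (contDiff_const.mul hG)

private lemma H_flat {G : ℝ → ℝ} (hG : ContDiff ℝ (⊤ : ℕ∞) G)
    (hflat : ∀ n : ℕ, iteratedDeriv n G 0 = 0) (m : ℕ) (n : ℕ) :
    iteratedDeriv n (fun x => x * deriv G x - (m : ℝ) * G x) 0 = 0 := by
  have : (fun x => x * deriv G x - (m : ℝ) * G x)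
      = fun x => x * deriv G x + (-(m : ℝ)) * G x := by funext x; ring
  have hg1 : ContDiff ℝ (⊤ : ℕ∞) (fun x => x * deriv G x) :=
    contDiff_id.mul (deriv_smooth hG)
  have hg2 : ContDiff ℝ (⊤ : ℕ∞) (fun x => (-(m : ℝ)) * G x) :=
    contDiff_const.mul hG
  rw [this, it_add hg1 hg2 n 0,
    it_cmul hG (-(m : ℝ)) n 0, hflat n,
    flat_id_mul n (deriv G) (deriv_smooth hG) (deriv_flat hflat)]
  ring

private lemma hasDerivAt_qq_ne {G : ℝ → ℝ} (hG : ContDiff ℝ (⊤ : ℕ∞) G) (m : ℕ)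
    {x : ℝ} (hx : x ≠ 0) :
    HasDerivAt (qq G m) ((x * deriv G x - (m : ℝ) * G x) / x ^ (m + 1)) x := by
  have hne : ∀ᶠ y in 𝓝 x, y ≠ 0 := isOpen_compl_singleton.eventually_mem hx
  have heq : qq G m =ᶠ[𝓝 x] fun y => G y / y ^ m := by
    filter_upwards [hne] with y hy
    simp [qq, hy]
  have hd : HasDerivAt (fun y => G y / y ^ m)
      ((deriv G x * x ^ m - G x * ((m : ℝ) * x ^ (m - 1))) / (x ^ m) ^ 2) x :=
    (G_diff hG x).hasDerivAt.div (hasDerivAt_pow m x) (pow_ne_zero m hx)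
  have hval : (deriv G x * x ^ m - G x * ((m : ℝ) * x ^ (m - 1))) / (x ^ m) ^ 2
      = (x * deriv G x - (m : ℝ) * G x) / x ^ (m + 1) := by
    rcases m with _ | k
    · field_simp
      simp
    · have hk : k + 1 - 1 = k := rfl
      rw [hk]
      field_simp
      ring
  rw [hval] at hd
  exact hd.congr_of_eventuallyEq heq

private lemma hasDerivAt_qq_zero {G : ℝ → ℝ} (hG : ContDiff ℝ (⊤ : ℕ∞) G)
    (hflat : ∀ n : ℕ, iteratedDeriv n G 0 = 0) (m : ℕ) :
    HasDerivAt (qq G m) 0 0 := by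
  rw [hasDerivAt_iff_tendsto_slope]
  refine (tendsto_aux (m + 1) G hG hflat).congr' ?_
  filter_upwards [self_mem_nhdsWithin] with x hx
  have hx' : (x : ℝ) ≠ 0 := hx
  rw [slope_def_field, qq_zero, sub_zero, sub_zero]
  simp only [qq, if_neg hx']
  rw [div_div, ← pow_succ]

private lemma deriv_qq {G : ℝ → ℝ} (hG : ContDiff ℝ (⊤ : ℕ∞) G)
    (hflat : ∀ n : ℕ, iteratedDeriv n G 0 = 0) (m : ℕ) :
    deriv (qq G m) = qq (fun x => x * deriv G x - (m : ℝ) * G x) (m + 1) := by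
  funext x
  by_cases hx : x = 0
  · subst hx
    rw [(hasDerivAt_qq_zero hG hflat m).deriv, qq_zero]
  · rw [(hasDerivAt_qq_ne hG m hx).deriv]
    simp [qq, hx]

private lemma qq_contDiff : ∀ n : ℕ, ∀ G : ℝ → ℝ, ContDiff ℝ (⊤ : ℕ∞) G →
    (∀ k : ℕ, iteratedDeriv k G 0 = 0) → ∀ m : ℕ, ContDiff ℝ n (qq G m) := by
  intro n
  induction n with
  | zero =>
    intro G hG hfl m
    rw [show ((0:ℕ):WithTop ℕ∞) = 0 from rfl, contDiff_zero, continuous_iff_continuousAt]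
    intro x
    by_cases hx : x = 0
    · subst hx
      unfold ContinuousAt
      rw [qq_zero]
      have h1 : Tendsto (qq G m) (𝓝[≠] (0:ℝ)) (𝓝 0) := by
        refine (tendsto_aux m G hG hfl).congr' ?_
        filter_upwards [self_mem_nhdsWithin] with y hy
        have hy' : y ≠ 0 := hy
        simp [qq, hy']
      have h2 : Tendsto (qq G m) (pure (0:ℝ)) (𝓝 0) := by
        have := tendsto_pure_nhds (qq G m) 0
        rwa [qq_zero] at this
      have := h1.sup h2
      rwa [nhdsNE_sup_pure] at this
    · have hne : ∀ᶠ y in 𝓝 x, y ≠ 0 := isOpen_compl_singleton.eventually_mem hx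
      have heq : (fun y => G y / y ^ m) =ᶠ[𝓝 x] qq G m := by
        filter_upwards [hne] with y hy; simp [qq, hy]
      exact (hG.continuous.continuousAt.div
        ((continuous_pow m).continuousAt) (pow_ne_zero m hx)).congr heq
  | succ n ih =>
    intro G hG hfl m
    have hcast : ((n + 1 : ℕ) : WithTop ℕ∞) = (n : WithTop ℕ∞) + 1 := by push_cast; ring
    rw [hcast, contDiff_succ_iff_deriv]
    refine ⟨?_, ?_, ?_⟩
    · intro x
      by_cases hx : x = 0
      · subst hx; exact (hasDerivAt_qq_zero hG hfl m).differentiableAt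
      · exact (hasDerivAt_qq_ne hG m hx).differentiableAt
    · intro hω; exact absurd hω (by simp)
    · rw [deriv_qq hG hfl m]
      exact ih _ (H_smooth hG m) (H_flat hG hfl m) (m + 1)

private lemma qq_flat : ∀ n : ℕ, ∀ G : ℝ → ℝ, ContDiff ℝ (⊤ : ℕ∞) G →
    (∀ k : ℕ, iteratedDeriv k G 0 = 0) → ∀ m : ℕ, iteratedDeriv n (qq G m) 0 = 0 := by
  intro n
  induction n with
  | zero => intro G hG hfl m; simpa [iteratedDeriv_zero] using qq_zero G m
  | succ n ih =>
    intro G hG hfl m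
    rw [iteratedDeriv_succ', deriv_qq hG hfl m]
    exact ih _ (H_smooth hG m) (H_flat hG hfl m) (m + 1)

/-- If `G` is smooth and flat at `0` (all iterated derivatives vanish at `0`) and `m ∈ ℕ`,
then `h(x) = G(x)/x^m` (extended by `h(0) = 0`) is again smooth and flat at `0`. -/
theorem flat_div_pow_smooth_flat (G : ℝ → ℝ) (hG : ContDiff ℝ (⊤ : ℕ∞) G)
    (hflat : ∀ n : ℕ, iteratedDeriv n G 0 = 0) (m : ℕ)
    (h : ℝ → ℝ) (hh : ∀ x : ℝ, h x = if x = 0 then 0 else G x / x ^ m) :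
    ContDiff ℝ (⊤ : ℕ∞) h ∧ ∀ n : ℕ, iteratedDeriv n h 0 = 0 := by
  have hq : h = qq G m := funext fun x => hh x
  subst hq
  refine ⟨contDiff_infty.mpr fun n => qq_contDiff n G hG hflat m, fun n => qq_flat n G hG hflat m⟩
end
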